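/- arXiv:1607.06297 — 2 statements merged into one kernel-verified Lean document; each statement's English description precedes it below -/
import Mathlib

section
/- Let p ∈ (1,∞) and δ ≥ 0. For every ε > 0 there exists a constant c_ε > 0 depending only on p and ε such that for all symmetric 3×3 real matrices P, Q, R one has (S(P) − S(Q))·(R − Q) ≤ ε·|F(P) − F(Q)|² + c_ε·|F(R) − F(Q)|². -/
/-- 3×3 real matrices, represented as functions. -/
abbrev M3 : Type := Fin 3 → Fin 3 → ℝ

/-- Symmetric part `P^sym = (P + Pᵀ)/2`. -/
noncomputable def sym3 (P : M3) : M3 := fun i j => (P i j + P j i) / 2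

/-- Frobenius norm. -/
noncomputable def frob3 (P : M3) : ℝ := Real.sqrt (∑ i, ∑ j, (P i j) ^ 2)

/-- Frobenius inner product `A·B = ∑_{ij} A_{ij} B_{ij}`. -/
noncomputable def dotF (A B : M3) : ℝ := ∑ i, ∑ j, A i j * B i j

/-- The stress tensor `S(P) = (δ+|P^sym|)^{p−2} P^sym`. -/
noncomputable def Smat (p δ : ℝ) (P : M3) : M3 :=
  fun i j => (δ + frob3 (sym3 P)) ^ (p - 2) * sym3 P i j

/-- `F(P) = (δ+|P^sym|)^{(p−2)/2} P^sym`. -/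
noncomputable def Fmat (p δ : ℝ) (P : M3) : M3 :=
  fun i j => (δ + frob3 (sym3 P)) ^ ((p - 2) / 2) * sym3 P i j


open Real

-- power function x^t ≤ x for x ≥ 1, 0 ≤ t ≤ 1
lemma pow_le_self_of_one_le {x t : ℝ} (hx : 1 ≤ x) (ht0 : 0 ≤ t) (ht1 : t ≤ 1) :
    x ^ t ≤ x := by
  calc x ^ t ≤ x ^ (1:ℝ) := Real.rpow_le_rpow_of_exponent_le hx ht1
  _ = x := Real.rpow_one x

/-- monotonicity of `t ↦ (a+t)^s * t` for `s > -1`. -/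
lemma phi_mono {s a u w : ℝ} (hs : -1 < s) (ha : 0 ≤ a) (hu : 0 ≤ u) (huw : u ≤ w) :
    (a + u) ^ s * u ≤ (a + w) ^ s * w := by
  rcases le_or_gt 0 s with hs0 | hs0
  · exact mul_le_mul (Real.rpow_le_rpow (by linarith) (by linarith) hs0) huw hu
      (Real.rpow_nonneg (by linarith) s)
  · rcases eq_or_lt_of_le hu with h0 | hu0
    · rw [← h0, mul_zero]
      exact mul_nonneg (Real.rpow_nonneg (by linarith) s) (by linarith)
    · -- u > 0
      obtain ⟨t, ht⟩ : ∃ t : ℝ, s = -t := ⟨-s, by ring⟩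
      have ht0 : 0 < t := by linarith
      have ht1 : t ≤ 1 := by linarith
      have hX : (0:ℝ) < a + u := by linarith
      have hY : (0:ℝ) < a + w := by linarith
      have key : u * (a + w) ^ t ≤ w * (a + u) ^ t := by
        have h1 : (a + w) ^ t = (a + u) ^ t * ((a + w)/(a + u)) ^ t := by
          rw [← Real.mul_rpow (le_of_lt hX) (by positivity)]
          rw [mul_div_cancel₀ _ (ne_of_gt hX)]
        have h2 : ((a + w)/(a + u)) ^ t ≤ (a + w)/(a + u) := by
          apply pow_le_self_of_one_le _ (le_of_lt ht0) ht1
          rw [le_div_iff₀ hX]; linarith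
        have h3 : u * ((a + w)/(a + u)) ≤ w := by
          rw [mul_div_assoc', div_le_iff₀ hX]; nlinarith
        calc u * (a + w) ^ t = u * ((a + u) ^ t * ((a + w)/(a + u)) ^ t) := by rw [h1]
          _ ≤ u * ((a + u) ^ t * ((a + w)/(a + u))) := by
              apply mul_le_mul_of_nonneg_left _ (le_of_lt hu0)
              exact mul_le_mul_of_nonneg_left h2 (by positivity)
          _ = (a + u) ^ t * (u * ((a + w)/(a + u))) := by ring
          _ ≤ (a + u) ^ t * w := mul_le_mul_of_nonneg_left h3 (by positivity)
          _ = w * (a + u) ^ t := by ring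
      have e1 : (a + u) ^ s = ((a + u) ^ t)⁻¹ := by
        rw [ht, Real.rpow_neg (le_of_lt hX)]
      have e2 : (a + w) ^ s = ((a + w) ^ t)⁻¹ := by
        rw [ht, Real.rpow_neg (le_of_lt hY)]
      rw [e1, e2, mul_comm, mul_comm _ w, ← div_eq_mul_inv, ← div_eq_mul_inv,
        div_le_div_iff₀ (by positivity) (by positivity)]
      exact key

/-- Young-type inequality with shift. -/
lemma young_phi {s a u v e : ℝ} (hs : -1 < s) (he : 0 < e) (he1 : e ≤ 1)
    (ha : 0 ≤ a) (hu : 0 ≤ u) (hv : 0 ≤ v) :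
    (a + u) ^ s * u * v ≤ e * ((a + u) ^ s * u ^ 2)
      + e ^ (-(max s 0) - 1) * ((a + v) ^ s * v ^ 2) := by
  have hterm2 : 0 ≤ e ^ (-(max s 0) - 1) * ((a + v) ^ s * v ^ 2) := by positivity
  rcases le_or_gt v (e * u) with hcase | hcase
  · have h1 : (a + u) ^ s * u * v ≤ (a + u) ^ s * u * (e * u) := by
      apply mul_le_mul_of_nonneg_left hcase (by positivity)
    nlinarith
  · have hv0 : 0 < v := lt_of_le_of_lt (by positivity) hcase
    have huv : u ≤ v / e := by rw [le_div_iff₀ he]; nlinarith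
    have h1 : (a + u) ^ s * u ≤ (a + v / e) ^ s * (v / e) := phi_mono hs ha hu huv
    have h2 : (a + v / e) ^ s ≤ e ^ (-(max s 0)) * (a + v) ^ s := by
      rcases le_or_gt 0 s with hs0 | hs0
      · have hmax : max s 0 = s := max_eq_left hs0
        have hb : a + v / e ≤ (a + v) / e := by
          have hae : a * e ≤ a := mul_le_of_le_one_right ha he1
          have hve : v / e * e = v := div_mul_cancel₀ v he.ne'
          rw [le_div_iff₀ he]; nlinarith [hae, hve]
        calc (a + v / e) ^ s ≤ ((a + v) / e) ^ s :=
              Real.rpow_le_rpow (by positivity) hb hs0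
          _ = (a + v) ^ s / e ^ s := Real.div_rpow (by positivity) he.le s
          _ = e ^ (-(max s 0)) * (a + v) ^ s := by
              rw [hmax, Real.rpow_neg he.le]; ring
      · have hmax : max s 0 = 0 := max_eq_right hs0.le
        have hb : a + v ≤ a + v / e := by
          have : v ≤ v / e := by rw [le_div_iff₀ he]; nlinarith
          linarith
        have := Real.rpow_le_rpow_of_nonpos (by positivity) hb hs0.le
        rw [hmax]
        simpa using this
    have h3 : (a + u) ^ s * u * v ≤ e ^ (-(max s 0)) * (a + v) ^ s * (v / e) * v := by
      calc (a + u) ^ s * u * v ≤ (a + v / e) ^ s * (v / e) * v :=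
            mul_le_mul_of_nonneg_right h1 hv0.le
        _ ≤ e ^ (-(max s 0)) * (a + v) ^ s * (v / e) * v := by
            apply mul_le_mul_of_nonneg_right _ hv0.le
            apply mul_le_mul_of_nonneg_right h2 (by positivity)
    have h4 : e ^ (-(max s 0)) * (a + v) ^ s * (v / e) * v
        = e ^ (-(max s 0) - 1) * ((a + v) ^ s * v ^ 2) := by
      rw [Real.rpow_sub he, Real.rpow_one]
      field_simp
    have hterm1 : 0 ≤ e * ((a + u) ^ s * u ^ 2) := by positivity
    rw [h4] at h3
    linarith

lemma one_le_two_rpow_abs (s : ℝ) : (1:ℝ) ≤ 2 ^ |s| := by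
  calc (1:ℝ) = 2 ^ (0:ℝ) := (Real.rpow_zero 2).symm
  _ ≤ 2 ^ |s| := Real.rpow_le_rpow_of_exponent_le one_le_two (abs_nonneg s)

lemma rpow_comp_le {s x y : ℝ} (hx : 0 ≤ x) (hxy : x ≤ y) (hy2 : y ≤ 2 * x) :
    y ^ s ≤ 2 ^ |s| * x ^ s := by
  rcases eq_or_lt_of_le hx with h0 | hx0
  · have hy0 : y = 0 := le_antisymm (by linarith) (by linarith)
    rw [← h0, hy0]
    nlinarith [one_le_two_rpow_abs s, Real.rpow_nonneg (le_refl (0:ℝ)) s]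
  · rcases le_or_gt 0 s with hs0 | hs0
    · have h1 : y ^ s ≤ (2 * x) ^ s := Real.rpow_le_rpow (by linarith) hy2 hs0
      rw [Real.mul_rpow (by norm_num) hx] at h1
      calc y ^ s ≤ 2 ^ s * x ^ s := h1
        _ ≤ 2 ^ |s| * x ^ s := by
          apply mul_le_mul_of_nonneg_right _ (Real.rpow_nonneg hx s)
          exact Real.rpow_le_rpow_of_exponent_le one_le_two (le_abs_self s)
    · calc y ^ s ≤ x ^ s := Real.rpow_le_rpow_of_nonpos hx0 hxy hs0.le
        _ ≤ 2 ^ |s| * x ^ s := by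
          nlinarith [one_le_two_rpow_abs s, Real.rpow_nonneg hx s,
            Real.rpow_nonneg hx0.le s]

lemma rpow_comp_le' {s x y : ℝ} (hx : 0 ≤ x) (hxy : x ≤ y) (hy2 : y ≤ 2 * x) :
    x ^ s ≤ 2 ^ |s| * y ^ s := by
  rcases le_or_gt 0 s with hs0 | hs0
  · calc x ^ s ≤ y ^ s := Real.rpow_le_rpow hx hxy hs0
      _ ≤ 2 ^ |s| * y ^ s := by
        nlinarith [one_le_two_rpow_abs s, Real.rpow_nonneg (hx.trans hxy) s]
  · rcases eq_or_lt_of_le hx with h0 | hx0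
    · have hy0 : y = 0 := le_antisymm (by linarith) (by linarith)
      rw [← h0, hy0]
      nlinarith [one_le_two_rpow_abs s, Real.rpow_nonneg (le_refl (0:ℝ)) s]
    · have h1 : (2 * x) ^ s ≤ y ^ s :=
        Real.rpow_le_rpow_of_nonpos (by linarith) hy2 hs0.le
      rw [Real.mul_rpow (by norm_num) hx] at h1
      have h2 : x ^ s = 2 ^ |s| * (2 ^ s * x ^ s) := by
        rw [abs_of_neg hs0, ← mul_assoc, ← Real.rpow_add (by norm_num)]
        simp
      rw [h2]
      exact mul_le_mul_of_nonneg_left h1 (by positivity)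

/-- Scalar estimate for the `S` difference weight term. -/
lemma scalar_S {s δ q p : ℝ} (hs : -1 < s) (hδ : 0 ≤ δ) (hq : 0 ≤ q) (hqp : q ≤ p) :
    |(δ + p) ^ s - (δ + q) ^ s| * q
      ≤ (|s| + 2) * (2 ^ (2 * |s| + 1)) * ((δ + p + q) ^ s * (p - q)) := by
  have hp : 0 ≤ p := hq.trans hqp
  have hB0 : 0 ≤ δ + q := by linarith
  have hA0 : 0 ≤ δ + p := by linarith
  have hD1 : δ + p ≤ δ + p + q := by linarith
  have hD2 : δ + p + q ≤ 2 * (δ + p) := by linarith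
  have hC1 : (1:ℝ) ≤ 2 ^ (2 * |s| + 1) := by
    calc (1:ℝ) = 2 ^ (0:ℝ) := (Real.rpow_zero 2).symm
    _ ≤ _ := Real.rpow_le_rpow_of_exponent_le one_le_two (by positivity)
  have h2abs : (2:ℝ) ^ |s| * 2 ^ |s| ≤ 2 ^ (2 * |s| + 1) := by
    rw [← Real.rpow_add (by norm_num)]
    apply Real.rpow_le_rpow_of_exponent_le one_le_two
    nlinarith [abs_nonneg s]
  rcases eq_or_lt_of_le hA0 with hA | hA
  · -- δ + p = 0 : everything collapses
    have hp0 : p = 0 := by linarith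
    have hq0 : q = 0 := by linarith
    simp [hp0, hq0]
  · have hAD : (δ + p) ^ s ≤ 2 ^ |s| * (δ + p + q) ^ s := rpow_comp_le' hA0 hD1 hD2
    rcases le_or_gt ((δ + p) / 2) (p - q) with hbr | hbr
    · -- branch 1 : p - q large
      have key : |(δ + p) ^ s - (δ + q) ^ s| * q ≤ (δ + p) ^ s * (δ + p) := by
        rcases le_or_gt 0 s with hs0 | hs0
        · have hBA : (δ + q) ^ s ≤ (δ + p) ^ s :=
            Real.rpow_le_rpow hB0 (by linarith) hs0
          rw [abs_of_nonneg (by linarith)]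
          have : (δ + p) ^ s - (δ + q) ^ s ≤ (δ + p) ^ s := by
            nlinarith [Real.rpow_nonneg hB0 s]
          nlinarith [Real.rpow_nonneg hA0 s]
        · rcases eq_or_lt_of_le hB0 with hB | hB
          · have hq0 : q = 0 := by linarith
            simp [hq0]
            positivity
          · have hAB : (δ + p) ^ s ≤ (δ + q) ^ s :=
              Real.rpow_le_rpow_of_nonpos hB (by linarith) hs0.le
            rw [abs_of_nonpos (by linarith)]
            have h1 : ((δ + q) ^ s - (δ + p) ^ s) * q ≤ (δ + q) ^ s * q := by
              nlinarith [Real.rpow_nonneg hA0 s]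
            have h2 : (δ + q) ^ s * q ≤ (δ + q) ^ s * (δ + q) := by
              apply mul_le_mul_of_nonneg_left (by linarith) (Real.rpow_nonneg hB0 s)
            have h3 : (δ + q) ^ s * (δ + q) = (δ + q) ^ (s + 1) := by
              rw [Real.rpow_add hB, Real.rpow_one]
            have h4 : (δ + q) ^ (s + 1) ≤ (δ + p) ^ (s + 1) :=
              Real.rpow_le_rpow hB0 (by linarith) (by linarith)
            have h5 : (δ + p) ^ (s + 1) = (δ + p) ^ s * (δ + p) := by
              rw [Real.rpow_add hA, Real.rpow_one]
            linarith
      have h6 : (δ + p) ^ s * (δ + p) ≤ (δ + p) ^ s * (2 * (p - q)) := by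
        apply mul_le_mul_of_nonneg_left (by linarith) (Real.rpow_nonneg hA0 s)
      have h7 : (δ + p) ^ s * (2 * (p - q)) ≤ 2 ^ |s| * (δ + p + q) ^ s * (2 * (p - q)) := by
        apply mul_le_mul_of_nonneg_right hAD (by linarith)
      have hDs : 0 ≤ (δ + p + q) ^ s * (p - q) :=
        mul_nonneg (Real.rpow_nonneg (by linarith) s) (by linarith)
      have h8 : 2 ^ |s| * (δ + p + q) ^ s * (2 * (p - q))
          ≤ (|s| + 2) * (2 ^ (2 * |s| + 1)) * ((δ + p + q) ^ s * (p - q)) := by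
        have e1 : (2:ℝ) ^ |s| * (δ + p + q) ^ s * (2 * (p - q))
            = (2 * 2 ^ |s|) * ((δ + p + q) ^ s * (p - q)) := by ring
        rw [e1]
        apply mul_le_mul_of_nonneg_right _ hDs
        have : (2:ℝ) * 2 ^ |s| = 2 ^ (|s| + 1) := by
          rw [Real.rpow_add (by norm_num), Real.rpow_one]; ring
        rw [this]
        calc (2:ℝ) ^ (|s| + 1) ≤ 2 ^ (2 * |s| + 1) :=
            Real.rpow_le_rpow_of_exponent_le one_le_two (by nlinarith [abs_nonneg s])
          _ ≤ (|s| + 2) * 2 ^ (2 * |s| + 1) := by nlinarith [abs_nonneg s]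
      linarith
    · -- branch 2 : p - q < (δ+p)/2, use MVT
      have hB : (δ + p) / 2 < δ + q := by linarith
      have hBpos : 0 < δ + q := by linarith
      rcases eq_or_lt_of_le hqp with hpq | hpq
      · simp [hpq]
      · have hab : δ + q < δ + p := by linarith
        obtain ⟨ξ, hξmem, hξ⟩ := exists_deriv_eq_slope (fun x => x ^ s) hab
          (fun x hx => (Real.continuousAt_rpow_const x s
            (Or.inl (ne_of_gt (lt_of_lt_of_le hBpos hx.1)))).continuousWithinAt)
          (fun x hx => ((Real.hasDerivAt_rpow_const
            (p := s) (Or.inl (ne_of_gt (lt_trans hBpos hx.1)))).differentiableAt).differentiableWithinAt)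
        have hξpos : 0 < ξ := lt_trans hBpos hξmem.1
        have hderiv : deriv (fun x => x ^ s) ξ = s * ξ ^ (s - 1) :=
          (Real.hasDerivAt_rpow_const (p := s) (Or.inl hξpos.ne')).deriv
        rw [hderiv] at hξ
        have hdiff : (δ + p) ^ s - (δ + q) ^ s = s * ξ ^ (s - 1) * (p - q) := by
          have h0 : δ + p - (δ + q) = p - q := by ring
          rw [h0, eq_div_iff (ne_of_gt (by linarith : (0:ℝ) < p - q))] at hξ
          linarith
        have habs : |(δ + p) ^ s - (δ + q) ^ s| = |s| * ξ ^ (s - 1) * (p - q) := by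
          rw [hdiff, abs_mul, abs_mul, abs_of_nonneg (Real.rpow_nonneg hξpos.le (s-1)),
            abs_of_nonneg (show (0:ℝ) ≤ p - q by linarith)]
        have hq_le : q ≤ ξ := le_trans (by linarith) hξmem.1.le
        have hstep : ξ ^ (s - 1) * q ≤ ξ ^ s := by
          calc ξ ^ (s - 1) * q ≤ ξ ^ (s - 1) * ξ :=
              mul_le_mul_of_nonneg_left hq_le (Real.rpow_nonneg hξpos.le _)
            _ = ξ ^ s := by rw [← Real.rpow_add_one hξpos.ne' (s-1)]; ring_nf
        have hξA : ξ ≤ δ + p := hξmem.2.le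
        have hA2ξ : δ + p ≤ 2 * ξ := by nlinarith [hξmem.1]
        have hξD : ξ ^ s ≤ 2 ^ |s| * (δ + p) ^ s := rpow_comp_le' hξpos.le hξA hA2ξ
        have hfin : ξ ^ s ≤ 2 ^ |s| * (2 ^ |s| * (δ + p + q) ^ s) := by
          calc ξ ^ s ≤ 2 ^ |s| * (δ + p) ^ s := hξD
            _ ≤ 2 ^ |s| * (2 ^ |s| * (δ + p + q) ^ s) :=
              mul_le_mul_of_nonneg_left hAD (by positivity)
        have hDs : 0 ≤ (δ + p + q) ^ s := Real.rpow_nonneg (by linarith) s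
        calc |(δ + p) ^ s - (δ + q) ^ s| * q = |s| * (ξ ^ (s - 1) * q) * (p - q) := by
              rw [habs]; ring
          _ ≤ |s| * ξ ^ s * (p - q) := by
              apply mul_le_mul_of_nonneg_right _ (by linarith)
              exact mul_le_mul_of_nonneg_left hstep (abs_nonneg s)
          _ ≤ |s| * (2 ^ |s| * (2 ^ |s| * (δ + p + q) ^ s)) * (p - q) := by
              apply mul_le_mul_of_nonneg_right _ (by linarith)
              exact mul_le_mul_of_nonneg_left hfin (abs_nonneg s)
          _ = |s| * (2 ^ |s| * 2 ^ |s|) * ((δ + p + q) ^ s * (p - q)) := by ring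
          _ ≤ |s| * (2 ^ (2 * |s| + 1)) * ((δ + p + q) ^ s * (p - q)) := by
              apply mul_le_mul_of_nonneg_right _ (mul_nonneg hDs (by linarith))
              exact mul_le_mul_of_nonneg_left h2abs (abs_nonneg s)
          _ ≤ (|s| + 2) * (2 ^ (2 * |s| + 1)) * ((δ + p + q) ^ s * (p - q)) :=
              mul_le_mul_of_nonneg_right
                (mul_le_mul_of_nonneg_right (by linarith [abs_nonneg s]) (by positivity))
                (mul_nonneg hDs (by linarith))
  done

/-- Scalar monotonicity: `(δ+p)^σ p - (δ+q)^σ q ≥ min(σ+1,1) (δ+p)^σ (p-q)`. -/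
lemma scalar_mono {σ δ q p : ℝ} (hσ : -1 < σ) (hδ : 0 ≤ δ) (hq : 0 ≤ q) (hqp : q ≤ p) :
    min (σ + 1) 1 * ((δ + p) ^ σ * (p - q)) ≤ (δ + p) ^ σ * p - (δ + q) ^ σ * q := by
  have hp : 0 ≤ p := hq.trans hqp
  have hA0 : 0 ≤ δ + p := by linarith
  have hB0 : 0 ≤ δ + q := by linarith
  have hmin1 : min (σ + 1) 1 ≤ 1 := min_le_right _ _
  have hmin0 : 0 < min (σ + 1) 1 := lt_min (by linarith) one_pos
  rcases le_or_gt 0 σ with hσ0 | hσ0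
  · have h1 : (δ + q) ^ σ ≤ (δ + p) ^ σ := Real.rpow_le_rpow hB0 (by linarith) hσ0
    have h2 : (δ + q) ^ σ * q ≤ (δ + p) ^ σ * q := mul_le_mul_of_nonneg_right h1 hq
    have h3 : min (σ + 1) 1 * ((δ + p) ^ σ * (p - q)) ≤ (δ + p) ^ σ * (p - q) := by
      nlinarith [mul_nonneg (Real.rpow_nonneg hA0 σ) (sub_nonneg.mpr hqp)]
    nlinarith
  · have hmin : min (σ + 1) 1 = σ + 1 := min_eq_left (by linarith)
    rcases eq_or_lt_of_le hq with hq0 | hq0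
    · -- q = 0
      rw [hmin, ← hq0]
      have h0 : 0 ≤ (δ + p) ^ σ * p := mul_nonneg (Real.rpow_nonneg hA0 σ) hp
      nlinarith
    · -- q > 0
      have hBpos : (0:ℝ) < δ + q := by linarith
      have hApos : (0:ℝ) < δ + p := by linarith
      obtain ⟨tt, htt⟩ : ∃ tt : ℝ, σ = -tt := ⟨-σ, by ring⟩
      have htt0 : 0 < tt := by linarith
      have htt1 : tt < 1 := by linarith
      -- key : q * (δ+p)^tt ≤ (δ+q)^tt * ((1-tt)*q + tt*p)
      have step1 : (δ + p) ^ tt ≤ (δ + q) ^ tt * (p / q) ^ tt := by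
        rw [← Real.mul_rpow hBpos.le (by positivity)]
        apply Real.rpow_le_rpow hApos.le _ htt0.le
        rw [mul_div_assoc', le_div_iff₀ hq0]
        nlinarith
      have step2 : (p / q) ^ tt ≤ tt * (p / q) + (1 - tt) := by
        have := Real.geom_mean_le_arith_mean2_weighted htt0.le (by linarith : (0:ℝ) ≤ 1 - tt)
          (by positivity : (0:ℝ) ≤ p / q) zero_le_one (by ring)
        simpa using this
      have key : q * (δ + p) ^ tt ≤ (δ + q) ^ tt * ((1 - tt) * q + tt * p) := by
        have h4 : q * ((δ + q) ^ tt * (p / q) ^ tt) ≤ (δ + q) ^ tt * ((1 - tt) * q + tt * p) := by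
          have h5 : q * (p / q) = p := by field_simp
          have h6 : q * (p / q) ^ tt ≤ (1 - tt) * q + tt * p := by
            calc q * (p / q) ^ tt ≤ q * (tt * (p / q) + (1 - tt)) :=
                mul_le_mul_of_nonneg_left step2 hq
              _ = tt * (q * (p / q)) + (1 - tt) * q := by ring
              _ = (1 - tt) * q + tt * p := by rw [h5]; ring
          calc q * ((δ + q) ^ tt * (p / q) ^ tt) = (δ + q) ^ tt * (q * (p / q) ^ tt) := by ring
            _ ≤ (δ + q) ^ tt * ((1 - tt) * q + tt * p) :=
              mul_le_mul_of_nonneg_left h6 (Real.rpow_nonneg hBpos.le tt)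
        calc q * (δ + p) ^ tt ≤ q * ((δ + q) ^ tt * (p / q) ^ tt) :=
            mul_le_mul_of_nonneg_left step1 hq
          _ ≤ _ := h4
      -- convert back
      have e1 : (δ + p) ^ σ = ((δ + p) ^ tt)⁻¹ := by rw [htt, Real.rpow_neg hApos.le]
      have e2 : (δ + q) ^ σ = ((δ + q) ^ tt)⁻¹ := by rw [htt, Real.rpow_neg hBpos.le]
      have goal2 : (δ + q) ^ σ * q ≤ (δ + p) ^ σ * ((1 - tt) * q + tt * p) := by
        rw [e1, e2, mul_comm, mul_comm _ ((1 - tt) * q + tt * p), ← div_eq_mul_inv,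
          ← div_eq_mul_inv, div_le_div_iff₀ (by positivity) (by positivity)]
        linarith [key]
      rw [hmin]
      have : (σ + 1) * ((δ + p) ^ σ * (p - q)) = (δ + p) ^ σ * p - (δ + p) ^ σ * ((1 - tt) * q + tt * p) := by
        rw [htt]; ring
      linarith

noncomputable def cMc (σ : ℝ) : ℝ := min (σ + 1) 1 * 2 ^ (-(|σ| + 1))

lemma cMc_pos {σ : ℝ} (hσ : -1 < σ) : 0 < cMc σ := by
  unfold cMc
  have : (0:ℝ) < 2 ^ (-(|σ| + 1)) := Real.rpow_pos_of_pos (by norm_num) _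
  have : 0 < min (σ + 1) 1 := lt_min (by linarith) one_pos
  positivity

lemma cMc_le {σ : ℝ} (hσ : -1 < σ) : 2 ^ |σ| * cMc σ ≤ min (σ + 1) 1 / 2 := by
  unfold cMc
  have h : (2:ℝ) ^ |σ| * 2 ^ (-(|σ| + 1)) = 2 ^ (-(1:ℝ)) := by
    rw [← Real.rpow_add (by norm_num)]; congr 1; ring
  have h2 : (2:ℝ) ^ (-(1:ℝ)) = 1/2 := by
    rw [Real.rpow_neg (by norm_num), Real.rpow_one]; norm_num
  calc 2 ^ |σ| * (min (σ + 1) 1 * 2 ^ (-(|σ| + 1)))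
      = min (σ + 1) 1 * (2 ^ |σ| * 2 ^ (-(|σ| + 1))) := by ring
    _ ≤ min (σ + 1) 1 / 2 := le_of_eq (by rw [h, h2]; ring)

/-- The quadratic-form monotonicity estimate. -/
lemma scalar_M {σ δ α β t : ℝ} (hσ : -1 < σ) (hδ : 0 ≤ δ) (hβ : 0 ≤ β) (hβα : β ≤ α)
    (ht1 : -(α * β) ≤ t) (ht2 : t ≤ α * β) :
    cMc σ * ((δ + α + β) ^ σ * (α ^ 2 + β ^ 2 - 2 * t))
      ≤ (δ + α) ^ σ * α ^ 2 + (δ + β) ^ σ * β ^ 2 - ((δ + α) ^ σ + (δ + β) ^ σ) * t := by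
  have hα : 0 ≤ α := hβ.trans hβα
  have hA0 : 0 ≤ δ + α := by linarith
  have hB0 : 0 ≤ δ + β := by linarith
  have hD0 : 0 ≤ δ + α + β := by linarith
  have hmin0 : 0 < min (σ + 1) 1 := lt_min (by linarith) one_pos
  have hmin1 : min (σ + 1) 1 ≤ 1 := min_le_right _ _
  have hcM : 0 < cMc σ := cMc_pos hσ
  have hDA : (δ + α + β) ^ σ ≤ 2 ^ |σ| * (δ + α) ^ σ :=
    rpow_comp_le hA0 (by linarith) (by linarith)
  have hAσ : 0 ≤ (δ + α) ^ σ := Real.rpow_nonneg hA0 σ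
  have hBσ : 0 ≤ (δ + β) ^ σ := Real.rpow_nonneg hB0 σ
  have hDσ : 0 ≤ (δ + α + β) ^ σ := Real.rpow_nonneg hD0 σ
  -- key comparison : cMc σ * D^σ ≤ min(σ+1,1)/2 * (δ+α)^σ
  have hkey : cMc σ * (δ + α + β) ^ σ ≤ min (σ + 1) 1 / 2 * (δ + α) ^ σ := by
    calc cMc σ * (δ + α + β) ^ σ ≤ cMc σ * (2 ^ |σ| * (δ + α) ^ σ) :=
        mul_le_mul_of_nonneg_left hDA hcM.le
      _ = (2 ^ |σ| * cMc σ) * (δ + α) ^ σ := by ring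
      _ ≤ min (σ + 1) 1 / 2 * (δ + α) ^ σ :=
        mul_le_mul_of_nonneg_right (cMc_le hσ) hAσ
  -- endpoint t = α β
  have claim1 : cMc σ * ((δ + α + β) ^ σ * (α - β) ^ 2)
      ≤ (δ + α) ^ σ * α ^ 2 + (δ + β) ^ σ * β ^ 2 - ((δ + α) ^ σ + (δ + β) ^ σ) * (α * β) := by
    have hrhs : (δ + α) ^ σ * α ^ 2 + (δ + β) ^ σ * β ^ 2 - ((δ + α) ^ σ + (δ + β) ^ σ) * (α * β)
        = (α - β) * ((δ + α) ^ σ * α - (δ + β) ^ σ * β) := by ring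
    have hmono := scalar_mono hσ hδ hβ hβα
    rw [hrhs]
    calc cMc σ * ((δ + α + β) ^ σ * (α - β) ^ 2)
        = (cMc σ * (δ + α + β) ^ σ) * (α - β) ^ 2 := by ring
      _ ≤ (min (σ + 1) 1 / 2 * (δ + α) ^ σ) * (α - β) ^ 2 :=
          mul_le_mul_of_nonneg_right hkey (sq_nonneg _)
      _ ≤ (min (σ + 1) 1 * (δ + α) ^ σ) * (α - β) ^ 2 := by
          nlinarith [sq_nonneg (α - β), mul_nonneg hAσ (sq_nonneg (α - β)), hmin0]
      _ = (α - β) * (min (σ + 1) 1 * ((δ + α) ^ σ * (α - β))) := by ring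
      _ ≤ (α - β) * ((δ + α) ^ σ * α - (δ + β) ^ σ * β) :=
          mul_le_mul_of_nonneg_left hmono (by linarith)
  -- endpoint t = -α β
  have claim2 : cMc σ * ((δ + α + β) ^ σ * (α + β) ^ 2)
      ≤ (δ + α) ^ σ * α ^ 2 + (δ + β) ^ σ * β ^ 2 + ((δ + α) ^ σ + (δ + β) ^ σ) * (α * β) := by
    have h1 : cMc σ * ((δ + α + β) ^ σ * (α + β) ^ 2)
        ≤ 1 / 2 * ((δ + α) ^ σ * (α + β) ^ 2) := by
      calc cMc σ * ((δ + α + β) ^ σ * (α + β) ^ 2)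
          = (cMc σ * (δ + α + β) ^ σ) * (α + β) ^ 2 := by ring
        _ ≤ (min (σ + 1) 1 / 2 * (δ + α) ^ σ) * (α + β) ^ 2 :=
            mul_le_mul_of_nonneg_right hkey (sq_nonneg _)
        _ ≤ 1 / 2 * ((δ + α) ^ σ * (α + β) ^ 2) := by
            nlinarith [mul_nonneg hAσ (sq_nonneg (α + β))]
    have h2 : (α + β) ^ 2 ≤ 2 * (α ^ 2 + α * β) := by nlinarith
    have h3 : 1 / 2 * ((δ + α) ^ σ * (α + β) ^ 2) ≤ (δ + α) ^ σ * α ^ 2 + (δ + α) ^ σ * (α * β) := by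
      nlinarith [mul_le_mul_of_nonneg_left h2 hAσ]
    nlinarith [mul_nonneg hBσ (sq_nonneg β), mul_nonneg (mul_nonneg hBσ hα) hβ]
  -- affine interpolation in t
  set X := (δ + α) ^ σ with hXd
  set Y := (δ + β) ^ σ with hYd
  set Z := (δ + α + β) ^ σ with hZd
  set c := cMc σ with hcd
  clear_value X Y Z c
  clear hkey hDA hXd hYd hZd hcd hcM hmin0 hmin1
  rcases le_or_gt 0 (X + Y - 2 * (c * Z)) with hB | hB
  · have hBt : (X + Y - 2 * (c * Z)) * t ≤ (X + Y - 2 * (c * Z)) * (α * β) :=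
      mul_le_mul_of_nonneg_left ht2 hB
    linarith [claim1, hBt, sq_nonneg (α - β)]
  · have hBt : (X + Y - 2 * (c * Z)) * t ≤ (X + Y - 2 * (c * Z)) * (-(α * β)) :=
      mul_le_mul_of_nonpos_left ht1 hB.le
    linarith [claim2, hBt, sq_nonneg (α + β)]






noncomputable def toE (A : M3) : EuclideanSpace ℝ (Fin 3 × Fin 3) := WithLp.toLp 2 (fun ij : Fin 3 × Fin 3 => A ij.1 ij.2)

lemma frob3_eq_norm (A : M3) : frob3 A = ‖toE A‖ := by
  rw [EuclideanSpace.norm_eq, frob3]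
  congr 1
  rw [Fintype.sum_prod_type]
  simp [toE, Real.norm_eq_abs, sq_abs]

lemma dotF_eq_inner (A B : M3) : dotF A B = inner ℝ (toE A) (toE B) := by
  rw [dotF, PiLp.inner_apply, Fintype.sum_prod_type]
  simp [toE, RCLike.inner_apply, mul_comm]

lemma toE_sub (A B : M3) : toE (A - B) = toE A - toE B := by ext ij; simp [toE]

lemma toE_smul (c : ℝ) (A : M3) : toE (fun i j => c * A i j) = c • toE A := by ext ij; simp [toE]

lemma frob3_nonneg (A : M3) : 0 ≤ frob3 A := by rw [frob3_eq_norm]; exact norm_nonneg _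

lemma dotF_le (A B : M3) : dotF A B ≤ frob3 A * frob3 B := by
  rw [dotF_eq_inner, frob3_eq_norm, frob3_eq_norm]; exact real_inner_le_norm _ _

lemma abs_frob3_sub (A B : M3) : |frob3 A - frob3 B| ≤ frob3 (A - B) := by
  rw [frob3_eq_norm, frob3_eq_norm, frob3_eq_norm, toE_sub]
  exact abs_norm_sub_norm_le _ _

lemma frob3_sub_le (A B : M3) : frob3 (A - B) ≤ frob3 A + frob3 B := by
  rw [frob3_eq_norm, frob3_eq_norm, frob3_eq_norm, toE_sub]
  exact norm_sub_le _ _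

lemma frob3_eq_zero {A B : M3} (h : frob3 (A - B) = 0) : A = B := by
  rw [frob3_eq_norm, toE_sub, norm_eq_zero, sub_eq_zero] at h
  funext i j
  have := congrArg (fun x => x (i, j)) h
  exact this

lemma toE_neg (A : M3) : toE (-A) = -toE A := by ext ij; simp [toE]

lemma frob3_neg (A : M3) : frob3 (-A) = frob3 A := by
  rw [frob3_eq_norm, frob3_eq_norm, toE_neg, norm_neg]

lemma rpow_comp2 {s x y : ℝ} (hx : 0 ≤ x) (hy : 0 ≤ y) (h1 : x ≤ 2 * y) (h2 : y ≤ 2 * x) :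
    x ^ s ≤ 2 ^ |s| * y ^ s := by
  rcases le_total x y with h | h
  · exact rpow_comp_le' hx h h2
  · exact rpow_comp_le hy h h1

/-- Matrix bound for the difference of the stress maps (ordered version). -/
lemma matS_aux {s δ : ℝ} (hs : -1 < s) (hδ : 0 ≤ δ) (P Q : M3)
    (hQP : frob3 Q ≤ frob3 P) :
    frob3 (fun i j => (δ + frob3 P) ^ s * P i j - (δ + frob3 Q) ^ s * Q i j)
      ≤ ((|s| + 2) * 2 ^ (2 * |s| + 1) + 2 ^ |s|)
          * ((δ + frob3 P + frob3 Q) ^ s * frob3 (P - Q)) := by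
  set a : ℝ := δ + frob3 P with ha
  set b : ℝ := δ + frob3 Q with hb
  have hPn : 0 ≤ frob3 P := frob3_nonneg P
  have hQn : 0 ≤ frob3 Q := frob3_nonneg Q
  have hun : 0 ≤ frob3 (P - Q) := frob3_nonneg _
  have ha0 : 0 ≤ a := by rw [ha]; linarith
  have hD0 : (0:ℝ) ≤ δ + frob3 P + frob3 Q := by linarith
  have hDs : 0 ≤ (δ + frob3 P + frob3 Q) ^ s := Real.rpow_nonneg hD0 s
  -- decomposition in the Euclidean space
  have hX : toE (fun i j => a ^ s * P i j - b ^ s * Q i j)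
      = (a ^ s) • (toE P - toE Q) + (a ^ s - b ^ s) • toE Q := by
    ext ij
    simp [toE, smul_eq_mul]
    ring
  have hnorm : frob3 (fun i j => a ^ s * P i j - b ^ s * Q i j)
      ≤ a ^ s * frob3 (P - Q) + |a ^ s - b ^ s| * frob3 Q := by
    rw [frob3_eq_norm, hX]
    calc ‖(a ^ s) • (toE P - toE Q) + (a ^ s - b ^ s) • toE Q‖
        ≤ ‖(a ^ s) • (toE P - toE Q)‖ + ‖(a ^ s - b ^ s) • toE Q‖ := norm_add_le _ _
      _ = a ^ s * frob3 (P - Q) + |a ^ s - b ^ s| * frob3 Q := by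
          rw [norm_smul, norm_smul, Real.norm_eq_abs, Real.norm_eq_abs,
            abs_of_nonneg (Real.rpow_nonneg ha0 s), frob3_eq_norm, frob3_eq_norm, toE_sub]
  -- first term
  have hterm1 : a ^ s * frob3 (P - Q)
      ≤ 2 ^ |s| * ((δ + frob3 P + frob3 Q) ^ s * frob3 (P - Q)) := by
    have h1 : a ^ s ≤ 2 ^ |s| * (δ + frob3 P + frob3 Q) ^ s :=
      rpow_comp2 ha0 hD0 (by rw [ha]; linarith) (by rw [ha]; linarith)
    calc a ^ s * frob3 (P - Q) ≤ (2 ^ |s| * (δ + frob3 P + frob3 Q) ^ s) * frob3 (P - Q) :=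
        mul_le_mul_of_nonneg_right h1 hun
      _ = 2 ^ |s| * ((δ + frob3 P + frob3 Q) ^ s * frob3 (P - Q)) := by ring
  -- second term
  have hterm2 : |a ^ s - b ^ s| * frob3 Q
      ≤ (|s| + 2) * 2 ^ (2 * |s| + 1) * ((δ + frob3 P + frob3 Q) ^ s * frob3 (P - Q)) := by
    have h2 := scalar_S (q := frob3 Q) (p := frob3 P) hs hδ hQn hQP
    rw [← ha, ← hb] at h2
    have h3 : frob3 P - frob3 Q ≤ frob3 (P - Q) := by
      have := abs_frob3_sub P Q
      calc frob3 P - frob3 Q ≤ |frob3 P - frob3 Q| := le_abs_self _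
        _ ≤ frob3 (P - Q) := this
    have h4 : (δ + frob3 P + frob3 Q) ^ s * (frob3 P - frob3 Q)
        ≤ (δ + frob3 P + frob3 Q) ^ s * frob3 (P - Q) :=
      mul_le_mul_of_nonneg_left h3 hDs
    have hC : (0:ℝ) ≤ (|s| + 2) * 2 ^ (2 * |s| + 1) := by positivity
    calc |a ^ s - b ^ s| * frob3 Q
        ≤ (|s| + 2) * 2 ^ (2 * |s| + 1) * ((δ + frob3 P + frob3 Q) ^ s * (frob3 P - frob3 Q)) := h2
      _ ≤ (|s| + 2) * 2 ^ (2 * |s| + 1) * ((δ + frob3 P + frob3 Q) ^ s * frob3 (P - Q)) :=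
          mul_le_mul_of_nonneg_left h4 hC
  calc frob3 (fun i j => a ^ s * P i j - b ^ s * Q i j)
      ≤ a ^ s * frob3 (P - Q) + |a ^ s - b ^ s| * frob3 Q := hnorm
    _ ≤ _ := by linarith
    
/-- Matrix bound for the difference of the stress maps. -/
lemma matS {s δ : ℝ} (hs : -1 < s) (hδ : 0 ≤ δ) (P Q : M3) :
    frob3 (fun i j => (δ + frob3 P) ^ s * P i j - (δ + frob3 Q) ^ s * Q i j)
      ≤ ((|s| + 2) * 2 ^ (2 * |s| + 1) + 2 ^ |s|)
          * ((δ + frob3 P + frob3 Q) ^ s * frob3 (P - Q)) := by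
  rcases le_total (frob3 Q) (frob3 P) with h | h
  · exact matS_aux hs hδ P Q h
  · have := matS_aux hs hδ Q P h
    have e1 : frob3 (fun i j => (δ + frob3 Q) ^ s * Q i j - (δ + frob3 P) ^ s * P i j)
        = frob3 (fun i j => (δ + frob3 P) ^ s * P i j - (δ + frob3 Q) ^ s * Q i j) := by
      have hneg : (fun i j => (δ + frob3 Q) ^ s * Q i j - (δ + frob3 P) ^ s * P i j)
          = -(fun i j => (δ + frob3 P) ^ s * P i j - (δ + frob3 Q) ^ s * Q i j) := by
        funext i j
        show _ = -((fun i j => (δ + frob3 P) ^ s * P i j - (δ + frob3 Q) ^ s * Q i j) i j)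
        ring
      rw [hneg, frob3_neg]
    have e2 : frob3 (Q - P) = frob3 (P - Q) := by
      rw [frob3_eq_norm, frob3_eq_norm, toE_sub, toE_sub, norm_sub_rev]
    have e3 : δ + frob3 Q + frob3 P = δ + frob3 P + frob3 Q := by ring
    rw [e1, e2, e3] at this
    exact this

/-- Matrix lower bound: monotonicity of `Tσ`. -/
lemma matF {σ δ : ℝ} (hσ : -1 < σ) (hδ : 0 ≤ δ) (P Q : M3) :
    cMc σ * ((δ + frob3 P + frob3 Q) ^ σ * frob3 (P - Q))
      ≤ frob3 (fun i j => (δ + frob3 P) ^ σ * P i j - (δ + frob3 Q) ^ σ * Q i j) := by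
  set α := frob3 P with hα
  set β := frob3 Q with hβ
  have hαn : 0 ≤ α := frob3_nonneg P
  have hβn : 0 ≤ β := frob3_nonneg Q
  have hun : 0 ≤ frob3 (P - Q) := frob3_nonneg _
  have hxα : α = ‖toE P‖ := frob3_eq_norm P
  have hyβ : β = ‖toE Q‖ := frob3_eq_norm Q
  set t : ℝ := inner ℝ (toE P) (toE Q) with htdef
  have htabs : |t| ≤ α * β := by
    rw [hxα, hyβ]; exact abs_real_inner_le_norm _ _
  have ht1 : -(α * β) ≤ t := (abs_le.mp htabs).1
  have ht2 : t ≤ α * β := (abs_le.mp htabs).2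
  -- the inner product identity
  have hX : toE (fun i j => (δ + α) ^ σ * P i j - (δ + β) ^ σ * Q i j)
      = ((δ + α) ^ σ) • toE P - ((δ + β) ^ σ) • toE Q := by
    ext ij; simp [toE, smul_eq_mul]
  have hdot : dotF (fun i j => (δ + α) ^ σ * P i j - (δ + β) ^ σ * Q i j) (P - Q)
      = (δ + α) ^ σ * α ^ 2 + (δ + β) ^ σ * β ^ 2 - ((δ + α) ^ σ + (δ + β) ^ σ) * t := by
    rw [dotF_eq_inner, toE_sub, hX]
    have hc : (inner ℝ (toE Q) (toE P) : ℝ) = t := by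
      rw [htdef]; exact real_inner_comm _ _
    rw [inner_sub_left, inner_sub_right, inner_sub_right, real_inner_smul_left,
      real_inner_smul_left, real_inner_smul_left, real_inner_smul_left,
      real_inner_self_eq_norm_sq, real_inner_self_eq_norm_sq, hc, ← htdef, ← hxα, ← hyβ]
    ring
  have hu2 : frob3 (P - Q) ^ 2 = α ^ 2 + β ^ 2 - 2 * t := by
    rw [frob3_eq_norm, toE_sub, norm_sub_sq_real, ← hxα, ← hyβ, ← htdef]
    ring
  -- the scalar quadratic lemma (with possibly swapped roles)
  have hquad : cMc σ * ((δ + α + β) ^ σ * (α ^ 2 + β ^ 2 - 2 * t))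
      ≤ (δ + α) ^ σ * α ^ 2 + (δ + β) ^ σ * β ^ 2 - ((δ + α) ^ σ + (δ + β) ^ σ) * t := by
    rcases le_total β α with h | h
    · exact scalar_M hσ hδ hβn h ht1 ht2
    · have := scalar_M (α := β) (β := α) (t := t) hσ hδ hαn h
        (by linarith) (by linarith)
      have e3 : δ + β + α = δ + α + β := by ring
      rw [e3] at this
      linarith [this]
  -- Cauchy-Schwarz conclusion
  have hcs : dotF (fun i j => (δ + α) ^ σ * P i j - (δ + β) ^ σ * Q i j) (P - Q)
      ≤ frob3 (fun i j => (δ + α) ^ σ * P i j - (δ + β) ^ σ * Q i j) * frob3 (P - Q) :=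
    dotF_le _ _
  rcases eq_or_lt_of_le hun with hu0 | hu0
  · rw [← hu0, mul_zero, mul_zero]
    exact frob3_nonneg _
  · have hmain : (cMc σ * ((δ + α + β) ^ σ * frob3 (P - Q))) * frob3 (P - Q)
        ≤ (frob3 (fun i j => (δ + α) ^ σ * P i j - (δ + β) ^ σ * Q i j)) * frob3 (P - Q) := by
      have e : (cMc σ * ((δ + α + β) ^ σ * frob3 (P - Q))) * frob3 (P - Q)
          = cMc σ * ((δ + α + β) ^ σ * (frob3 (P - Q) ^ 2)) := by ring
      rw [e, hu2]
      linarith [hquad, hdot, hcs]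
    exact le_of_mul_le_mul_right hmain hu0

lemma sym3_eq {P : M3} (h : ∀ i j, P i j = P j i) : sym3 P = P := by
  funext i j
  rw [sym3, ← h i j]
  ring

set_option maxHeartbeats 2000000 in
/-- For `p ∈ (1,∞)` and every `ε > 0` there exists `c_ε > 0` depending only on `p`
and `ε` such that for all `δ ≥ 0` and all symmetric 3×3 matrices `P, Q, R`:
`(S(P)−S(Q))·(R−Q) ≤ ε·|F(P)−F(Q)|² + c_ε·|F(R)−F(Q)|²`. -/
theorem quasinorm_trick (p : ℝ) (hp : 1 < p) (ε : ℝ) (hε : 0 < ε) :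
    ∃ c : ℝ, 0 < c ∧
      ∀ δ : ℝ, 0 ≤ δ → ∀ P Q R : M3,
        (∀ i j, P i j = P j i) → (∀ i j, Q i j = Q j i) → (∀ i j, R i j = R j i) →
        dotF (Smat p δ P - Smat p δ Q) (R - Q)
          ≤ ε * (frob3 (Fmat p δ P - Fmat p δ Q)) ^ 2
            + c * (frob3 (Fmat p δ R - Fmat p δ Q)) ^ 2 := by
  have hs : (-1:ℝ) < p - 2 := by linarith
  have hσ : (-1:ℝ) < (p - 2) / 2 := by linarith
  -- constants
  set CS : ℝ := (|p - 2| + 2) * 2 ^ (2 * |p - 2| + 1) + 2 ^ |p - 2| with hCS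
  have hCSpos : 0 < CS := by
    have h1 : (0:ℝ) < 2 ^ (2 * |p - 2| + 1) := Real.rpow_pos_of_pos (by norm_num) _
    have h2 : (0:ℝ) < 2 ^ |p - 2| := Real.rpow_pos_of_pos (by norm_num) _
    have h3 : (0:ℝ) ≤ |p - 2| := abs_nonneg _
    positivity
  set K : ℝ := CS * 2 ^ |p - 2| with hK
  have h2pos : (0:ℝ) < 2 ^ |p - 2| := Real.rpow_pos_of_pos (by norm_num) _
  have hKpos : 0 < K := mul_pos hCSpos h2pos
  set cm : ℝ := cMc ((p - 2) / 2) with hcm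
  have hcmpos : 0 < cm := cMc_pos hσ
  set e : ℝ := min 1 (ε * cm ^ 2 / (K * 2 ^ |p - 2|)) with he
  have hepos : 0 < e := lt_min one_pos
    (div_pos (mul_pos hε (pow_pos hcmpos 2)) (mul_pos hKpos h2pos))
  have he1 : e ≤ 1 := min_le_left _ _
  set e' : ℝ := e ^ (-(max (p - 2) 0) - 1) with he'
  have he'pos : 0 < e' := Real.rpow_pos_of_pos hepos _
  have hemin : e ≤ ε * cm ^ 2 / (K * 2 ^ |p - 2|) := min_le_right _ _
  clear_value CS K cm e e'
  refine ⟨K * e' * 2 ^ |p - 2| / cm ^ 2,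
    div_pos (mul_pos (mul_pos hKpos he'pos) h2pos) (pow_pos hcmpos 2), ?_⟩
  intro δ hδ P Q R hPs hQs hRs
  have sP := sym3_eq hPs
  have sQ := sym3_eq hQs
  have sR := sym3_eq hRs
  have hSdef : Smat p δ P - Smat p δ Q
      = fun i j => (δ + frob3 P) ^ (p - 2) * P i j - (δ + frob3 Q) ^ (p - 2) * Q i j := by
    funext i j
    simp [Smat, sP, sQ]
  have hFPQ : Fmat p δ P - Fmat p δ Q
      = fun i j => (δ + frob3 P) ^ ((p - 2) / 2) * P i j
          - (δ + frob3 Q) ^ ((p - 2) / 2) * Q i j := by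
    funext i j
    simp [Fmat, sP, sQ]
  have hFRQ : Fmat p δ R - Fmat p δ Q
      = fun i j => (δ + frob3 R) ^ ((p - 2) / 2) * R i j
          - (δ + frob3 Q) ^ ((p - 2) / 2) * Q i j := by
    funext i j
    simp [Fmat, sR, sQ]
  rw [hSdef, hFPQ, hFRQ]
  have hPn := frob3_nonneg P
  have hQn := frob3_nonneg Q
  have hRn := frob3_nonneg R
  have hun := frob3_nonneg (P - Q)
  have hvn := frob3_nonneg (R - Q)
  have hfPn := frob3_nonneg (fun i j => (δ + frob3 P) ^ ((p - 2) / 2) * P i j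
          - (δ + frob3 Q) ^ ((p - 2) / 2) * Q i j)
  have hfRn := frob3_nonneg (fun i j => (δ + frob3 R) ^ ((p - 2) / 2) * R i j
          - (δ + frob3 Q) ^ ((p - 2) / 2) * Q i j)
  -- trivial case : R = Q
  rcases eq_or_lt_of_le hvn with hv0 | hv0
  · have hRQ : R = Q := frob3_eq_zero hv0.symm
    have hzero : dotF (fun i j => (δ + frob3 P) ^ (p - 2) * P i j
        - (δ + frob3 Q) ^ (p - 2) * Q i j) (R - Q) = 0 := by
      rw [hRQ]
      simp [dotF]
    rw [hzero]
    have := sq_nonneg (frob3 (fun i j => (δ + frob3 P) ^ ((p - 2) / 2) * P i j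
          - (δ + frob3 Q) ^ ((p - 2) / 2) * Q i j))
    have := sq_nonneg (frob3 (fun i j => (δ + frob3 R) ^ ((p - 2) / 2) * R i j
          - (δ + frob3 Q) ^ ((p - 2) / 2) * Q i j))
    positivity
  -- trivial case : P = Q
  rcases eq_or_lt_of_le hun with hu0 | hu0
  · have hPQ : P = Q := frob3_eq_zero hu0.symm
    have hzero : dotF (fun i j => (δ + frob3 P) ^ (p - 2) * P i j
        - (δ + frob3 Q) ^ (p - 2) * Q i j) (R - Q) = 0 := by
      rw [hPQ]
      simp [dotF]
    rw [hzero]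
    positivity
  -- main case
  have hDPQpos : (0:ℝ) < δ + frob3 P + frob3 Q := by
    have := frob3_sub_le P Q
    linarith
  have hDRQpos : (0:ℝ) < δ + frob3 R + frob3 Q := by
    have := frob3_sub_le R Q
    linarith
  have htriP : |frob3 P - frob3 Q| ≤ frob3 (P - Q) := abs_frob3_sub P Q
  have htriR : |frob3 R - frob3 Q| ≤ frob3 (R - Q) := abs_frob3_sub R Q
  have htriP1 : frob3 P - frob3 Q ≤ frob3 (P - Q) := (abs_le.mp htriP).2
  have htriR1 : frob3 R - frob3 Q ≤ frob3 (R - Q) := (abs_le.mp htriR).2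
  have hsubP : frob3 (P - Q) ≤ frob3 P + frob3 Q := frob3_sub_le P Q
  have hsubR : frob3 (R - Q) ≤ frob3 R + frob3 Q := frob3_sub_le R Q
  -- step 1 : Cauchy-Schwarz
  have h1 : dotF (fun i j => (δ + frob3 P) ^ (p - 2) * P i j
        - (δ + frob3 Q) ^ (p - 2) * Q i j) (R - Q)
      ≤ frob3 (fun i j => (δ + frob3 P) ^ (p - 2) * P i j
        - (δ + frob3 Q) ^ (p - 2) * Q i j) * frob3 (R - Q) := dotF_le _ _
  -- step 2 : bound on |S(P)-S(Q)|
  have h2 := matS (s := p - 2) (δ := δ) hs hδ P Q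
  rw [← hCS] at h2
  -- step 3 : comparability of weights
  have h3 : ((δ + frob3 P + frob3 Q) : ℝ) ^ (p - 2)
      ≤ 2 ^ |p - 2| * ((δ + frob3 Q) + frob3 (P - Q)) ^ (p - 2) :=
    rpow_comp2 hDPQpos.le (by linarith) (by linarith [htriP1]) (by linarith [hsubP])
  have h3' : ((δ + frob3 Q) + frob3 (P - Q)) ^ (p - 2)
      ≤ 2 ^ |p - 2| * ((δ + frob3 P + frob3 Q) : ℝ) ^ (p - 2) :=
    rpow_comp2 (by linarith) hDPQpos.le (by linarith [hsubP]) (by linarith [htriP1])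
  have h3R : ((δ + frob3 Q) + frob3 (R - Q)) ^ (p - 2)
      ≤ 2 ^ |p - 2| * ((δ + frob3 R + frob3 Q) : ℝ) ^ (p - 2) :=
    rpow_comp2 (by linarith) hDRQpos.le (by linarith [hsubR]) (by linarith [htriR1])
  -- step 4 : Young
  have h4 := young_phi (s := p - 2) (a := δ + frob3 Q) (u := frob3 (P - Q))
    (v := frob3 (R - Q)) hs hepos he1 (by linarith) hun hvn
  rw [← he'] at h4
  -- step 5 : lower bounds from matF
  have h5P := matF (σ := (p - 2) / 2) (δ := δ) hσ hδ P Q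
  have h5R := matF (σ := (p - 2) / 2) (δ := δ) hσ hδ R Q
  rw [← hcm] at h5P h5R
  have hhalf : (p - 2) / 2 + (p - 2) / 2 = p - 2 := by ring
  have hsqP : ((δ + frob3 P + frob3 Q) : ℝ) ^ (p - 2)
      = ((δ + frob3 P + frob3 Q) ^ ((p - 2) / 2)) * ((δ + frob3 P + frob3 Q) ^ ((p - 2) / 2)) := by
    rw [← Real.rpow_add hDPQpos, hhalf]
  have hsqR : ((δ + frob3 R + frob3 Q) : ℝ) ^ (p - 2)
      = ((δ + frob3 R + frob3 Q) ^ ((p - 2) / 2)) * ((δ + frob3 R + frob3 Q) ^ ((p - 2) / 2)) := by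
    rw [← Real.rpow_add hDRQpos, hhalf]
  have hFP2 : cm ^ 2 * (((δ + frob3 P + frob3 Q) : ℝ) ^ (p - 2) * frob3 (P - Q) ^ 2)
      ≤ (frob3 (fun i j => (δ + frob3 P) ^ ((p - 2) / 2) * P i j
          - (δ + frob3 Q) ^ ((p - 2) / 2) * Q i j)) ^ 2 := by
    have := mul_self_le_mul_self (mul_nonneg hcmpos.le
      (mul_nonneg (Real.rpow_nonneg hDPQpos.le _) hun)) h5P
    calc cm ^ 2 * (((δ + frob3 P + frob3 Q) : ℝ) ^ (p - 2) * frob3 (P - Q) ^ 2)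
        = (cm * ((δ + frob3 P + frob3 Q) ^ ((p - 2) / 2) * frob3 (P - Q)))
          * (cm * ((δ + frob3 P + frob3 Q) ^ ((p - 2) / 2) * frob3 (P - Q))) := by
          rw [hsqP]; ring
      _ ≤ _ := by rw [sq]; exact this
  have hFR2 : cm ^ 2 * (((δ + frob3 R + frob3 Q) : ℝ) ^ (p - 2) * frob3 (R - Q) ^ 2)
      ≤ (frob3 (fun i j => (δ + frob3 R) ^ ((p - 2) / 2) * R i j
          - (δ + frob3 Q) ^ ((p - 2) / 2) * Q i j)) ^ 2 := by
    have := mul_self_le_mul_self (mul_nonneg hcmpos.le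
      (mul_nonneg (Real.rpow_nonneg hDRQpos.le _) hvn)) h5R
    calc cm ^ 2 * (((δ + frob3 R + frob3 Q) : ℝ) ^ (p - 2) * frob3 (R - Q) ^ 2)
        = (cm * ((δ + frob3 R + frob3 Q) ^ ((p - 2) / 2) * frob3 (R - Q)))
          * (cm * ((δ + frob3 R + frob3 Q) ^ ((p - 2) / 2) * frob3 (R - Q))) := by
          rw [hsqR]; ring
      _ ≤ _ := by rw [sq]; exact this
  -- abbreviations
  set u : ℝ := frob3 (P - Q)
  set v : ℝ := frob3 (R - Q)
  set fP : ℝ := frob3 (fun i j => (δ + frob3 P) ^ ((p - 2) / 2) * P i j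
          - (δ + frob3 Q) ^ ((p - 2) / 2) * Q i j)
  set fR : ℝ := frob3 (fun i j => (δ + frob3 R) ^ ((p - 2) / 2) * R i j
          - (δ + frob3 Q) ^ ((p - 2) / 2) * Q i j)
  set A : ℝ := ((δ + frob3 Q) + u) ^ (p - 2)
  set B : ℝ := ((δ + frob3 Q) + v) ^ (p - 2)
  set DP : ℝ := ((δ + frob3 P + frob3 Q) : ℝ) ^ (p - 2)
  set DR : ℝ := ((δ + frob3 R + frob3 Q) : ℝ) ^ (p - 2)
  have hApos : 0 ≤ A := Real.rpow_nonneg (by linarith) _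
  have hBpos : 0 ≤ B := Real.rpow_nonneg (by linarith) _
  have hDPpos : 0 ≤ DP := Real.rpow_nonneg hDPQpos.le _
  have hDRpos : 0 ≤ DR := Real.rpow_nonneg hDRQpos.le _
  clear_value u v fP fR A B DP DR
  -- combine : dotF ≤ K * (A * u * v)
  have hchain1 : dotF (fun i j => (δ + frob3 P) ^ (p - 2) * P i j
        - (δ + frob3 Q) ^ (p - 2) * Q i j) (R - Q) ≤ K * (A * u * v) := by
    have s1 : frob3 (fun i j => (δ + frob3 P) ^ (p - 2) * P i j
        - (δ + frob3 Q) ^ (p - 2) * Q i j) * v ≤ (CS * (DP * u)) * v :=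
      mul_le_mul_of_nonneg_right h2 hvn
    have s2 : (CS * (DP * u)) * v ≤ (CS * ((2 ^ |p - 2| * A) * u)) * v := by
      apply mul_le_mul_of_nonneg_right _ hvn
      apply mul_le_mul_of_nonneg_left _ hCSpos.le
      exact mul_le_mul_of_nonneg_right h3 hun
    have s3 : (CS * ((2 ^ |p - 2| * A) * u)) * v = K * (A * u * v) := by
      rw [hK]; ring
    linarith
  -- combine : Young + weight comparison + matF
  have hchain2 : K * (A * u * v) ≤ ε * fP ^ 2 + K * e' * 2 ^ |p - 2| / cm ^ 2 * fR ^ 2 := by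
    have s4 : K * (A * u * v) ≤ K * e * (A * u ^ 2) + K * e' * (B * v ^ 2) := by
      have := mul_le_mul_of_nonneg_left h4 hKpos.le
      calc K * (A * u * v) = K * (A * u * v) := rfl
        _ ≤ K * (e * (A * u ^ 2) + e' * (B * v ^ 2)) := by
            apply mul_le_mul_of_nonneg_left _ hKpos.le
            linarith [h4]
        _ = K * e * (A * u ^ 2) + K * e' * (B * v ^ 2) := by ring
    have s5 : A * u ^ 2 ≤ 2 ^ |p - 2| * (DP * u ^ 2) := by
      have := mul_le_mul_of_nonneg_right h3' (sq_nonneg u)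
      calc A * u ^ 2 ≤ (2 ^ |p - 2| * DP) * u ^ 2 := this
        _ = 2 ^ |p - 2| * (DP * u ^ 2) := by ring
    have s6 : B * v ^ 2 ≤ 2 ^ |p - 2| * (DR * v ^ 2) := by
      have := mul_le_mul_of_nonneg_right h3R (sq_nonneg v)
      calc B * v ^ 2 ≤ (2 ^ |p - 2| * DR) * v ^ 2 := this
        _ = 2 ^ |p - 2| * (DR * v ^ 2) := by ring
    have hcm2 : (0:ℝ) < cm ^ 2 := pow_pos hcmpos 2
    have s7 : DP * u ^ 2 ≤ fP ^ 2 / cm ^ 2 := by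
      rw [le_div_iff₀ hcm2]
      linarith [hFP2]
    have s8 : DR * v ^ 2 ≤ fR ^ 2 / cm ^ 2 := by
      rw [le_div_iff₀ hcm2]
      linarith [hFR2]
    have s9 : K * e * (A * u ^ 2) ≤ K * e * (2 ^ |p - 2| * (fP ^ 2 / cm ^ 2)) := by
      apply mul_le_mul_of_nonneg_left _ (mul_nonneg hKpos.le hepos.le)
      calc A * u ^ 2 ≤ 2 ^ |p - 2| * (DP * u ^ 2) := s5
        _ ≤ 2 ^ |p - 2| * (fP ^ 2 / cm ^ 2) := mul_le_mul_of_nonneg_left s7 h2pos.le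
    have s10 : K * e' * (B * v ^ 2) ≤ K * e' * 2 ^ |p - 2| / cm ^ 2 * fR ^ 2 := by
      calc K * e' * (B * v ^ 2) ≤ K * e' * (2 ^ |p - 2| * (fR ^ 2 / cm ^ 2)) := by
            apply mul_le_mul_of_nonneg_left _ (mul_nonneg hKpos.le he'pos.le)
            calc B * v ^ 2 ≤ 2 ^ |p - 2| * (DR * v ^ 2) := s6
              _ ≤ 2 ^ |p - 2| * (fR ^ 2 / cm ^ 2) := mul_le_mul_of_nonneg_left s8 h2pos.le
        _ = K * e' * 2 ^ |p - 2| / cm ^ 2 * fR ^ 2 := by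
            ring
    have s11 : K * e * (2 ^ |p - 2| * (fP ^ 2 / cm ^ 2)) ≤ ε * fP ^ 2 := by
      have hKe : K * 2 ^ |p - 2| * e ≤ ε * cm ^ 2 := by
        calc K * 2 ^ |p - 2| * e
            ≤ K * 2 ^ |p - 2| * (ε * cm ^ 2 / (K * 2 ^ |p - 2|)) :=
              mul_le_mul_of_nonneg_left hemin (mul_pos hKpos h2pos).le
          _ = ε * cm ^ 2 := by
              rw [mul_comm, div_mul_cancel₀ _ (ne_of_gt (mul_pos hKpos h2pos))]
      calc K * e * (2 ^ |p - 2| * (fP ^ 2 / cm ^ 2))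
          = (K * 2 ^ |p - 2| * e) * (fP ^ 2 / cm ^ 2) := by ring
        _ ≤ (ε * cm ^ 2) * (fP ^ 2 / cm ^ 2) :=
            mul_le_mul_of_nonneg_right hKe
              (div_nonneg (sq_nonneg _) (pow_pos hcmpos 2).le)
        _ = ε * fP ^ 2 := by
            rw [show (ε * cm ^ 2) * (fP ^ 2 / cm ^ 2) = ε * (fP ^ 2 / cm ^ 2 * cm ^ 2) from by
              ring, div_mul_cancel₀ _ (ne_of_gt hcm2)]
    linarith only [s4, s9, s10, s11]
  linarith only [hchain1, hchain2, h1]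
end

section
/- Let a : ℝ² → ℝ be measurable, h ≠ 0 and α ∈ {1,2}, and let f, g : ℝ³ → ℝ be measurable functions such that x ↦ f(x)·(T⁻g)(x) is Lebesgue integrable on ℝ³. Then x ↦ (T⁺f)(x)·g(x) is Lebesgue integrable on ℝ³ and ∫_{ℝ³} f·(T⁻g) dx = ∫_{ℝ³} (T⁺f)·g dx. Consequently, ∫_{ℝ³} f·(d⁺g) dx = ∫_{ℝ³} (d⁻f)·g dx whenever all products involved are integrable. -/
open MeasureTheory

/-- Points of ℝ². -/
abbrev P2 : Type := Fin 2 → ℝ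
/-- Points of ℝ³, written `x = (x', x₃)`. -/
abbrev P3 : Type := Fin 3 → ℝ

/-- The horizontal coordinates `x' = (x₁, x₂)` of a point of ℝ³. -/
def hor (x : P3) : P2 := fun β => x β.castSucc

/-- Build a point of ℝ³ from horizontal coordinates and a vertical coordinate. -/
def ext3 (y : P2) (z : ℝ) : P3 := fun i => Fin.lastCases z (fun β => y β) i

/-- The tangential translation map
`(x', x₃) ↦ (x' + h e_α, x₃ + a(x' + h e_α) − a(x'))`. -/
noncomputable def shiftPt (a : P2 → ℝ) (h : ℝ) (α : Fin 2) (x : P3) : P3 :=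
  ext3 (hor x + h • (Pi.single α 1 : P2))
    (x (Fin.last 2) + a (hor x + h • (Pi.single α 1 : P2)) - a (hor x))

/-- Tangential translation `T⁺g(x', x₃) = g(x' + h e_α, x₃ + a(x'+h e_α) − a(x'))`. -/
noncomputable def tplus (a : P2 → ℝ) (h : ℝ) (α : Fin 2) (g : P3 → ℝ) : P3 → ℝ :=
  fun x => g (shiftPt a h α x)

/-- Tangential translation `T⁻g(x', x₃) = g(x' − h e_α, x₃ + a(x'−h e_α) − a(x'))`. -/
noncomputable def tminus (a : P2 → ℝ) (h : ℝ) (α : Fin 2) (g : P3 → ℝ) : P3 → ℝ :=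
  fun x => g (shiftPt a (-h) α x)

/-- Tangential divided difference `d⁺g = (T⁺g − g)/h`. -/
noncomputable def dplus (a : P2 → ℝ) (h : ℝ) (α : Fin 2) (g : P3 → ℝ) : P3 → ℝ :=
  fun x => (tplus a h α g x - g x) / h

/-- Tangential divided difference `d⁻g = (T⁻g − g)/h`. -/
noncomputable def dminus (a : P2 → ℝ) (h : ℝ) (α : Fin 2) (g : P3 → ℝ) : P3 → ℝ :=
  fun x => (tminus a h α g x - g x) / h

lemma hor_ext3 (y : P2) (z : ℝ) : hor (ext3 y z) = y := by
  funext β; simp [hor, ext3]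

lemma ext3_last (y : P2) (z : ℝ) : ext3 y z (Fin.last 2) = z := by
  simp only [ext3, Fin.lastCases_last]

lemma ext3_hor (x : P3) : ext3 (hor x) (x (Fin.last 2)) = x := by
  funext i
  induction i using Fin.lastCases with
  | last => simp only [ext3, Fin.lastCases_last]
  | cast β => simp [ext3, hor]

lemma shiftPt_shiftPt (a : P2 → ℝ) (h : ℝ) (α : Fin 2) (x : P3) :
    shiftPt a (-h) α (shiftPt a h α x) = x := by
  have h2 : hor x + h • (Pi.single α 1 : P2) + (-h) • (Pi.single α 1 : P2) = hor x := by
    simp [neg_smul]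
  simp only [shiftPt, hor_ext3, ext3_last, h2]
  rw [show x (Fin.last 2) + a (hor x + h • (Pi.single α 1 : P2)) - a (hor x) + a (hor x)
      - a (hor x + h • (Pi.single α 1 : P2)) = x (Fin.last 2) by ring, ext3_hor]

lemma esymm_eq (p : ℝ × P2) :
    (MeasurableEquiv.piFinSuccAbove (fun _ : Fin 3 => ℝ) (Fin.last 2)).symm p = ext3 p.2 p.1 := by
  have hrfl : (MeasurableEquiv.piFinSuccAbove (fun _ : Fin 3 => ℝ) (Fin.last 2)).symm p
      = (Fin.last 2).insertNth p.1 p.2 := rfl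
  rw [hrfl]
  funext i
  induction i using Fin.lastCases with
  | last => rw [Fin.insertNth_apply_same, ext3_last]
  | cast β =>
    rw [show β.castSucc = (Fin.last 2).succAbove β from (congrFun Fin.succAbove_last β).symm,
      Fin.insertNth_apply_succAbove]
    simp only [ext3, Fin.succAbove_last, Fin.lastCases_castSucc]

lemma measurePreserving_shiftPt (a : P2 → ℝ) (ha : Measurable a) (h : ℝ) (α : Fin 2) :
    MeasurePreserving (shiftPt a h α) (volume : Measure P3) volume := by
  set c : P2 := h • (Pi.single α 1 : P2) with hc
  set e := MeasurableEquiv.piFinSuccAbove (fun _ : Fin 3 => ℝ) (Fin.last 2) with he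
  have hme : MeasurePreserving e volume volume :=
    volume_preserving_piFinSuccAbove (fun _ : Fin 3 => ℝ) (Fin.last 2)
  set m : P2 × ℝ → P2 × ℝ := fun p => (p.1 + c, p.2 + (a (p.1 + c) - a p.1)) with hm
  have hgm : Measurable (Function.uncurry fun (y : P2) (z : ℝ) => z + (a (y + c) - a y)) :=
    measurable_snd.add (((ha.comp (measurable_add_const c)).sub ha).comp measurable_fst)
  have hgae : ∀ᵐ (y : P2) ∂(volume : Measure P2),
      Measure.map (fun z : ℝ => z + (a (y + c) - a y)) volume = volume :=
    Filter.Eventually.of_forall fun y =>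
      (measurePreserving_add_right (volume : Measure ℝ) (a (y + c) - a y)).map_eq
  have hmm : MeasurePreserving m
      ((volume : Measure P2).prod (volume : Measure ℝ))
      ((volume : Measure P2).prod (volume : Measure ℝ)) :=
    MeasurePreserving.skew_product (measurePreserving_add_right (volume : Measure P2) c) hgm hgae
  have hswap1 : MeasurePreserving (Prod.swap : ℝ × P2 → P2 × ℝ)
      ((volume : Measure ℝ).prod (volume : Measure P2))
      ((volume : Measure P2).prod (volume : Measure ℝ)) := Measure.measurePreserving_swap
  have hswap2 : MeasurePreserving (Prod.swap : P2 × ℝ → ℝ × P2)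
      ((volume : Measure P2).prod (volume : Measure ℝ))
      ((volume : Measure ℝ).prod (volume : Measure P2)) := Measure.measurePreserving_swap
  have hkey : shiftPt a h α = (e.symm ∘ Prod.swap ∘ m ∘ Prod.swap) ∘ e := by
    funext x
    have hfst : (e x).1 = x (Fin.last 2) := rfl
    have hsnd : (e x).2 = hor x := by
      funext β
      show x ((Fin.last 2).succAbove β) = x β.castSucc
      rw [Fin.succAbove_last]
    simp only [Function.comp_apply, hm,
      show e x = (x (Fin.last 2), hor x) from Prod.ext hfst hsnd,
      Prod.swap_prod_mk]
    rw [he, esymm_eq]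
    simp only [shiftPt, hc]
    congr 1
    ring
  rw [hkey]
  exact ((hme.symm e).comp ((hswap2.comp (hmm.comp hswap1)))).comp hme

noncomputable def shiftEquiv (a : P2 → ℝ) (ha : Measurable a) (h : ℝ) (α : Fin 2) : P3 ≃ᵐ P3 where
  toFun := shiftPt a h α
  invFun := shiftPt a (-h) α
  left_inv x := shiftPt_shiftPt a h α x
  right_inv x := by have := shiftPt_shiftPt a (-h) α x; rwa [neg_neg] at this
  measurable_toFun := (measurePreserving_shiftPt a ha h α).measurable
  measurable_invFun := (measurePreserving_shiftPt a ha (-h) α).measurable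

lemma key_ibp (a : P2 → ℝ) (ha : Measurable a) (h : ℝ) (α : Fin 2)
    (f g : P3 → ℝ)
    (hint : Integrable (fun x => f x * tminus a h α g x)) :
    Integrable (fun x => tplus a h α f x * g x) ∧
      ∫ x : P3, f x * tminus a h α g x = ∫ x : P3, tplus a h α f x * g x := by
  set F : P3 → ℝ := fun x => f x * tminus a h α g x with hF
  have MP := measurePreserving_shiftPt a ha h α
  have emb : MeasurableEmbedding (shiftPt a h α) :=
    (shiftEquiv a ha h α).measurableEmbedding
  have hcomp : (fun y => tplus a h α f y * g y) = F ∘ shiftPt a h α := by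
    funext y
    simp only [hF, Function.comp_apply, tplus, tminus, shiftPt_shiftPt]
  constructor
  · rw [hcomp]
    exact (MP.integrable_comp_emb emb).2 hint
  · rw [hcomp]
    exact (MP.integral_comp emb F).symm

/-- Integration by parts for tangential translations: if `a` is measurable, `h ≠ 0`,
`f, g` are measurable and `f·(T⁻g)` is Lebesgue integrable on ℝ³, then `(T⁺f)·g` is
integrable and `∫ f·(T⁻g) = ∫ (T⁺f)·g`. Consequently `∫ f·(d⁺g) = ∫ (d⁻f)·g`
whenever all products involved are integrable. -/
theorem tangential_integration_by_parts
    (a : P2 → ℝ) (ha : Measurable a) (h : ℝ) (hh : h ≠ 0) (α : Fin 2)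
    (f g : P3 → ℝ) (hf : Measurable f) (hg : Measurable g)
    (hint : Integrable (fun x => f x * tminus a h α g x)) :
    (Integrable (fun x => tplus a h α f x * g x) ∧
      ∫ x : P3, f x * tminus a h α g x = ∫ x : P3, tplus a h α f x * g x) ∧
    (Integrable (fun x => f x * dplus a h α g x) →
      Integrable (fun x => dminus a h α f x * g x) →
      Integrable (fun x => f x * g x) →
      Integrable (fun x => f x * tplus a h α g x) →
      Integrable (fun x => tminus a h α f x * g x) →
      ∫ x : P3, f x * dplus a h α g x = ∫ x : P3, dminus a h α f x * g x) := by
  have tminus_neg : ∀ (F : P3 → ℝ), tminus a (-h) α F = tplus a h α F := by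
    intro F; funext x; simp [tminus, tplus, neg_neg]
  refine ⟨key_ibp a ha h α f g hint, ?_⟩
  intro h1 h2 h3 h4 h5
  have hint' : Integrable (fun x => f x * tminus a (-h) α g x) := by
    rw [tminus_neg]; exact h4
  have key2 := (key_ibp a ha (-h) α f g hint').2
  rw [tminus_neg] at key2
  have key2' : ∫ x : P3, f x * tplus a h α g x = ∫ x : P3, tminus a h α f x * g x := by
    rw [key2]; rfl
  have lhs : (fun x => f x * dplus a h α g x)
      = fun x => (f x * tplus a h α g x - f x * g x) / h := by
    funext x; simp only [dplus]; ring
  have rhs : (fun x => dminus a h α f x * g x)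
      = fun x => (tminus a h α f x * g x - f x * g x) / h := by
    funext x; simp only [dminus]; ring
  rw [lhs, rhs]
  rw [integral_div, integral_div, integral_sub h4 h3, integral_sub h5 h3, key2']
end
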